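/- Let k be a field and consider the 5×5 matrix H over k with rows (a₂, 0, a₁, a₇, a₆), (0, a₄, a₅, a₁₁, a₁₀), (a₄, a₂, a₃, a₉, a₈), (1, 0, 0, 0, 0), (0, 1, 0, 0, 0). If rank(H) ≤ 2 then aᵢ = 0 for all i ∈ {1, 3, 5, 6, 7, 8, 9, 10, 11}. -/

import Mathlib

lemma minor_det_zero' {k : Type*} [Field k] (A : Matrix (Fin 5) (Fin 5) k)
    (h : A.rank ≤ 2) (f g : Fin 3 → Fin 5) : (A.submatrix f g).det = 0 := by
  set B : Matrix (Fin 3) (Fin 5) k := Matrix.of (fun i j => if j = f i then 1 else 0) with hB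
  set C : Matrix (Fin 5) (Fin 3) k := Matrix.of (fun i j => if i = g j then 1 else 0) with hC
  have hM : B * A * C = A.submatrix f g := by
    ext i j
    simp [Matrix.mul_apply, hB, hC, Finset.sum_ite_eq, Finset.sum_ite_eq']
  have hr : (A.submatrix f g).rank ≤ 2 := by
    rw [← hM]
    exact le_trans (le_trans (Matrix.rank_mul_le_left _ _) (Matrix.rank_mul_le_right _ _)) h
  by_contra hd
  have : IsUnit (A.submatrix f g) := (Matrix.isUnit_iff_isUnit_det _).2 (isUnit_iff_ne_zero.2 hd)
  have := Matrix.rank_of_isUnit _ this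
  simp [this] at hr

/-- Over any field k, for the explicit 5×5 matrix H below, rank(H) ≤ 2
implies aᵢ = 0 for i ∈ {1,3,5,6,7,8,9,10,11}. -/
theorem stmt_12 {k : Type*} [Field k]
    (a₁ a₂ a₃ a₄ a₅ a₆ a₇ a₈ a₉ a₁₀ a₁₁ : k)
    (H : Matrix (Fin 5) (Fin 5) k)
    (hH : H = !![a₂, 0, a₁, a₇, a₆;
                 0, a₄, a₅, a₁₁, a₁₀;
                 a₄, a₂, a₃, a₉, a₈;
                 1, 0, 0, 0, 0;
                 0, 1, 0, 0, 0])
    (hrank : H.rank ≤ 2) :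
    a₁ = 0 ∧ a₃ = 0 ∧ a₅ = 0 ∧ a₆ = 0 ∧ a₇ = 0 ∧ a₈ = 0 ∧ a₉ = 0 ∧ a₁₀ = 0 ∧ a₁₁ = 0 := by
  have key : ∀ (i j : Fin 5), (H.submatrix ![i, 3, 4] ![0, 1, j]).det = 0 :=
    fun i j => minor_det_zero' H hrank _ _
  have h02 := key 0 2; have h03 := key 0 3; have h04 := key 0 4
  have h12 := key 1 2; have h13 := key 1 3; have h14 := key 1 4
  have h22 := key 2 2; have h23 := key 2 3; have h24 := key 2 4
  rw [Matrix.det_fin_three] at h02 h03 h04 h12 h13 h14 h22 h23 h24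
  simp [hH, Matrix.det_fin_three, Matrix.submatrix_apply, Matrix.vecHead,
    Matrix.vecTail] at h02 h03 h04 h12 h13 h14 h22 h23 h24
  exact ⟨h02, h22, h12, h04, h03, h24, h23, h14, h13⟩
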